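/- For every q ∈ (0,1] and every integer n ≥ 1, one has [n/2]_q ≥ n/(q^{1/2} + q^{−1/2}). -/

import Mathlib

/-- The `q`-number `[a]_q = (q^a - q^{-a})/(q - q⁻¹)` for `q ≠ 1`, and `a` for `q = 1`. -/
noncomputable def qNum (q a : ℝ) : ℝ :=
  if q = 1 then a else (q ^ a - q ^ (-a)) / (q - q⁻¹)

lemma polyAux (u : ℝ) (h0 : 0 < u) (h1 : u ≤ 1) :
    ∀ n : ℕ, (n : ℝ) * (u ^ n * (1 - u ^ 2)) ≤ u - u ^ (2 * n + 1) := by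
  intro n
  induction n with
  | zero => simp
  | succ n ih =>
    have hX0 : 0 < u ^ n := pow_pos h0 n
    have hX1 : u ^ n ≤ 1 := pow_le_one₀ h0.le h1
    have bern : 1 + (n : ℝ) * (u - 1) ≤ u ^ n := by
      have := one_add_mul_le_pow (by linarith : (-2:ℝ) ≤ u - 1) n
      simpa [add_comm] using this
    have t3 : u * (1 - u ^ n) ≤ (n : ℝ) * (1 - u) := by nlinarith
    have hint : 0 ≤ (1 - u ^ 2) * u ^ n * ((n : ℝ) * (1 - u) - u * (1 - u ^ n)) := by
      apply mul_nonneg (mul_nonneg (by nlinarith) hX0.le) (by linarith)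
    have e1 : u ^ (2 * (n + 1) + 1) = u ^ (2 * n + 1) * u ^ 2 := by ring
    have e2 : u ^ (n + 1) = u ^ n * u := by ring
    have eP : u ^ (2 * n + 1) = u ^ n * u ^ n * u := by ring
    have ih' : (n : ℝ) * (u ^ n * (1 - u ^ 2)) ≤ u - u ^ n * u ^ n * u := eP ▸ ih
    have ihu := mul_le_mul_of_nonneg_right ih' h0.le
    have hXu : u ^ n * u ≤ 1 := by nlinarith
    have hint2 : 0 ≤ u * (1 - u) * ((1 - u ^ n) * (1 - u ^ n * u)) := by
      apply mul_nonneg (mul_nonneg h0.le (by linarith))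
      exact mul_nonneg (by linarith) (by linarith)
    have eQ : u ^ (2 * (n + 1) + 1) = u ^ n * u ^ n * u ^ 3 := by ring
    push_cast
    rw [e2, eQ]
    nlinarith [ihu, hint2]

/-- For every `q ∈ (0,1]` and every integer `n ≥ 1`, one has
`[n/2]_q ≥ n/(q^{1/2} + q^{−1/2})`. -/
theorem statement13 (q : ℝ) (hq0 : 0 < q) (hq1 : q ≤ 1) (n : ℕ) (hn : 1 ≤ n) :
    (n : ℝ) / (q ^ ((1 : ℝ) / 2) + q ^ (-(1 : ℝ) / 2)) ≤ qNum q ((n : ℝ) / 2) := by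
  rcases eq_or_lt_of_le hq1 with h1 | hlt
  · subst h1
    simp [qNum, Real.one_rpow]
    norm_num
  · set u : ℝ := q ^ ((1 : ℝ) / 2) with hu
    have hu0 : 0 < u := Real.rpow_pos_of_pos hq0 _
    have hu1 : u < 1 := Real.rpow_lt_one hq0.le hlt (by norm_num)
    have hu2 : u ^ 2 = q := by
      rw [hu, ← Real.rpow_natCast (q ^ ((1:ℝ)/2)) 2, ← Real.rpow_mul hq0.le]
      norm_num
    have hun : q ^ ((n : ℝ) / 2) = u ^ n := by
      rw [hu, ← Real.rpow_natCast (q ^ ((1:ℝ)/2)) n, ← Real.rpow_mul hq0.le]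
      ring_nf
    have hunneg : q ^ (-((n : ℝ) / 2)) = (u ^ n)⁻¹ := by
      rw [Real.rpow_neg hq0.le, hun]
    have huneg : q ^ (-(1 : ℝ) / 2) = u⁻¹ := by
      rw [neg_div, Real.rpow_neg hq0.le, hu]
    have hqinv : q⁻¹ = (u ^ 2)⁻¹ := by rw [hu2]
    have hqne : q ≠ 1 := ne_of_lt hlt
    have hval : qNum q ((n : ℝ) / 2) = ((u ^ n)⁻¹ - u ^ n) / ((u ^ 2)⁻¹ - u ^ 2) := by
      rw [qNum, if_neg hqne, hun, hunneg, hqinv, ← hu2]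
      rw [← neg_sub (u ^ n), ← neg_sub (u ^ 2), neg_div_neg_eq]
    rw [hval, huneg]
    have hden1 : 0 < u + u⁻¹ := by positivity
    have hden2 : 0 < (u ^ 2)⁻¹ - u ^ 2 := by
      have : u ^ 2 < 1 := by nlinarith
      have h2 : 1 < (u ^ 2)⁻¹ := (one_lt_inv₀ (by positivity)).2 this
      linarith
    rw [div_le_div_iff₀ hden1 hden2]
    -- goal : n * ((u^2)⁻¹ - u^2) ≤ ((u^n)⁻¹ - u^n) * (u + u⁻¹)
    have hP := polyAux u hu0 hu1.le n
    have hstep := mul_le_mul_of_nonneg_right hP (show (0:ℝ) ≤ u * (1 + u ^ 2) by positivity)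
    have key2 : (n : ℝ) * (u ^ (n + 1) - u ^ (n + 5)) ≤
        u ^ 4 + u ^ 2 - u ^ (2 * n + 4) - u ^ (2 * n + 2) := by
      calc (n : ℝ) * (u ^ (n + 1) - u ^ (n + 5))
          = (n : ℝ) * (u ^ n * (1 - u ^ 2)) * (u * (1 + u ^ 2)) := by ring
        _ ≤ (u - u ^ (2 * n + 1)) * (u * (1 + u ^ 2)) := hstep
        _ = u ^ 4 + u ^ 2 - u ^ (2 * n + 4) - u ^ (2 * n + 2) := by ring
    rw [← mul_le_mul_iff_of_pos_right (show (0:ℝ) < u ^ (n + 3) from pow_pos hu0 _)]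
    have hune : (u : ℝ) ≠ 0 := hu0.ne'
    have e3 : (n : ℝ) * ((u ^ 2)⁻¹ - u ^ 2) * u ^ (n + 3)
        = (n : ℝ) * (u ^ (n + 1) - u ^ (n + 5)) := by
      field_simp
      ring
    have e4 : ((u ^ n)⁻¹ - u ^ n) * (u + u⁻¹) * u ^ (n + 3)
        = u ^ 4 + u ^ 2 - u ^ (2 * n + 4) - u ^ (2 * n + 2) := by
      field_simp
      ring
    rw [e3, e4]
    exact key2
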